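/- Let n ≥ 1 and let a_1, ..., a_n, b_1, ..., b_n be real random variables on a common probability space. Let ε ∈ ℝ and ν ∈ (0,1], and suppose P(b_i > a_i + ε) ≤ ν for every i ∈ {1, ..., n}. Let α satisfy 1/(n+1) + √ν ≤ α < 1. Then P(q_{n,α}{b_i} > q_{n,α−√ν}{a_i} + ε) ≤ n√ν / (n + 1) ≤ √ν. -/

import Mathlib

open MeasureTheory

lemma sorted_getD_le_getD {l : List ℝ} (hl : l.Pairwise (· ≤ ·)) {i j : ℕ}
    (hij : i ≤ j) (hj : j < l.length) : l.getD i 0 ≤ l.getD j 0 := by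
  have hi : i < l.length := lt_of_le_of_lt hij hj
  rw [List.getD_eq_getElem l 0 hi, List.getD_eq_getElem l 0 hj]
  rcases eq_or_lt_of_le hij with rfl | h
  · exact le_refl _
  · exact hl.rel_get_of_lt (a := ⟨i, hi⟩) (b := ⟨j, hj⟩) h

lemma le_countP_getD {l : List ℝ} (hl : l.Pairwise (· ≤ ·)) {k : ℕ} (hk : k < l.length) :
    k + 1 ≤ l.countP (fun x => decide (x ≤ l.getD k 0)) := by
  have h1 : l.countP (fun x => decide (x ≤ l.getD k 0)) =
      (l.take (k+1)).countP (fun x => decide (x ≤ l.getD k 0)) +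
      (l.drop (k+1)).countP (fun x => decide (x ≤ l.getD k 0)) := by
    rw [← List.countP_append, List.take_append_drop]
  have h2 : (l.take (k+1)).countP (fun x => decide (x ≤ l.getD k 0)) = (l.take (k+1)).length := by
    rw [List.countP_eq_length]
    intro x hx
    rw [List.mem_iff_getElem] at hx
    obtain ⟨i, hi, rfl⟩ := hx
    have hik : i ≤ k := by simp [List.length_take] at hi; omega
    have hi' : i < l.length := lt_of_le_of_lt hik hk
    have he : (l.take (k+1))[i] = l[i] := List.getElem_take
    rw [he]
    simp only [decide_eq_true_eq]
    have := sorted_getD_le_getD hl hik hk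
    rwa [List.getD_eq_getElem l 0 hi'] at this
  rw [h1, h2]
  have : (l.take (k+1)).length = k+1 := by simp [List.length_take]; omega
  omega

lemma countP_le_of_lt_getD {l : List ℝ} (hl : l.Pairwise (· ≤ ·)) {k : ℕ} (hk : k < l.length)
    {t : ℝ} (ht : t < l.getD k 0) : l.countP (fun x => decide (x ≤ t)) ≤ k := by
  have h1 : l.countP (fun x => decide (x ≤ t)) =
      (l.take k).countP (fun x => decide (x ≤ t)) +
      (l.drop k).countP (fun x => decide (x ≤ t)) := by
    rw [← List.countP_append, List.take_append_drop]
  have h2 : (l.drop k).countP (fun x => decide (x ≤ t)) = 0 := by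
    rw [List.countP_eq_zero]
    intro x hx
    rw [List.mem_iff_getElem] at hx
    obtain ⟨i, hi, rfl⟩ := hx
    have hi' : k + i < l.length := by simp [List.length_drop] at hi; omega
    have he : (l.drop k)[i] = l[k+i] := List.getElem_drop
    rw [he]
    simp only [decide_eq_true_eq, not_le]
    calc t < l.getD k 0 := ht
    _ ≤ l.getD (k+i) 0 := sorted_getD_le_getD hl (by omega) hi'
    _ = l[k+i] := List.getD_eq_getElem l 0 hi'
  have h3 : (l.take k).countP (fun x => decide (x ≤ t)) ≤ k := by
    calc _ ≤ (l.take k).length := List.countP_le_length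
    _ ≤ k := by simp [List.length_take]
  omega


/-- The `k`-th smallest value (1-indexed) among `v 0, ..., v (n-1)`. -/
noncomputable def kthSmallest {n : ℕ} (k : ℕ) (v : Fin n → ℝ) : ℝ :=
  (Multiset.sort (Multiset.map v Finset.univ.val) (· ≤ ·)).getD (k - 1) 0

/-- For `β ≥ 1/(n+1)`, `q_{n,β}{v}` is the `⌈(1 − β)(n + 1)⌉`-th smallest value among
`v 0, ..., v (n-1)`. -/
noncomputable def empQuantile {n : ℕ} (β : ℝ) (v : Fin n → ℝ) : ℝ :=
  kthSmallest ⌈(1 - β) * ((n:ℝ) + 1)⌉₊ v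

lemma count_filter_eq_countP {n : ℕ} (v : Fin n → ℝ) (t : ℝ) :
    (Finset.univ.filter (fun i => v i ≤ t)).card
      = (Multiset.sort (Multiset.map v Finset.univ.val) (· ≤ ·)).countP
          (fun x => decide (x ≤ t)) := by
  have : ((Multiset.sort (Multiset.map v Finset.univ.val) (· ≤ ·)) : Multiset ℝ)
      = Multiset.map v Finset.univ.val := Multiset.sort_eq _ _
  rw [← Multiset.coe_countP, this, Multiset.countP_map]
  rfl

lemma length_sort {n : ℕ} (v : Fin n → ℝ) :
    (Multiset.sort (Multiset.map v Finset.univ.val) (· ≤ ·)).length = n := by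
  rw [← Multiset.coe_card, Multiset.sort_eq]
  simp

lemma det_lemma {n : ℕ} (va vb : Fin n → ℝ) (ε : ℝ) {ka kb : ℕ}
    (hkb : 1 ≤ kb) (hka : ka ≤ n) (hkab : kb ≤ ka)
    (h : kthSmallest ka va + ε < kthSmallest kb vb) :
    ka - kb + 1 ≤ (Finset.univ.filter (fun i => va i + ε < vb i)).card := by
  set la := Multiset.sort (Multiset.map va Finset.univ.val) (· ≤ ·) with hla
  set lb := Multiset.sort (Multiset.map vb Finset.univ.val) (· ≤ ·) with hlb
  have hsa : la.Pairwise (· ≤ ·) := Multiset.pairwise_sort _ _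
  have hsb : lb.Pairwise (· ≤ ·) := Multiset.pairwise_sort _ _
  have hlena : la.length = n := length_sort va
  have hlenb : lb.length = n := length_sort vb
  set q := kthSmallest ka va with hq
  -- |S| ≥ ka
  have hS : ka ≤ (Finset.univ.filter (fun i => va i ≤ q)).card := by
    rw [count_filter_eq_countP, ← hla]
    have := le_countP_getD hsa (k := ka - 1) (by omega)
    have hq' : q = la.getD (ka - 1) 0 := rfl
    rw [hq']
    omega
  -- |T| ≤ kb - 1
  have hT : (Finset.univ.filter (fun i => vb i ≤ q + ε)).card ≤ kb - 1 := by
    rw [count_filter_eq_countP, ← hlb]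
    exact countP_le_of_lt_getD hsb (k := kb - 1) (by omega) h
  have hsub : (Finset.univ.filter (fun i => va i ≤ q)) \
      (Finset.univ.filter (fun i => vb i ≤ q + ε)) ⊆
      Finset.univ.filter (fun i => va i + ε < vb i) := by
    intro i hi
    simp only [Finset.mem_sdiff, Finset.mem_filter, Finset.mem_univ, true_and, not_le] at hi ⊢
    obtain ⟨h1, h2⟩ := hi
    linarith
  have := Finset.le_card_sdiff (Finset.univ.filter (fun i => vb i ≤ q + ε))
    (Finset.univ.filter (fun i => va i ≤ q))
  have := Finset.card_le_card hsub
  omega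

open MeasureTheory

/-- Let `a i, b i`, `i < n`, be real random variables, `ε ∈ ℝ`,
`ν ∈ (0,1]` with `P(b i > a i + ε) ≤ ν` for every `i`, and let `α` satisfy
`1/(n+1) + √ν ≤ α < 1`. Then
`P(q_{n,α}{b i} > q_{n,α−√ν}{a i} + ε) ≤ n √ν / (n + 1) ≤ √ν`. -/
theorem stmt16 {Ω : Type*} [MeasurableSpace Ω] (P : Measure Ω) [IsProbabilityMeasure P]
    (n : ℕ) (hn : 1 ≤ n) (a b : Fin n → Ω → ℝ)
    (hameas : ∀ i, Measurable (a i)) (hbmeas : ∀ i, Measurable (b i))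
    (ε ν : ℝ) (hν : ν ∈ Set.Ioc (0:ℝ) 1)
    (hab : ∀ i, P {ω | a i ω + ε < b i ω} ≤ ENNReal.ofReal ν)
    (α : ℝ) (hα1 : 1/((n:ℝ)+1) + Real.sqrt ν ≤ α) (hα2 : α < 1) :
    (P {ω | empQuantile (α - Real.sqrt ν) (fun i => a i ω) + ε <
        empQuantile α (fun i => b i ω)}).toReal
      ≤ (n:ℝ) * Real.sqrt ν / ((n:ℝ)+1) ∧
    (n:ℝ) * Real.sqrt ν / ((n:ℝ)+1) ≤ Real.sqrt ν := by
  obtain ⟨hν0, hν1⟩ := hν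
  set s := Real.sqrt ν with hs
  have hs0 : 0 < s := Real.sqrt_pos.mpr hν0
  have hss : s * s = ν := Real.mul_self_sqrt hν0.le
  have hn1 : (0:ℝ) < (n:ℝ) + 1 := by positivity
  set ka := ⌈(1 - (α - s)) * ((n:ℝ) + 1)⌉₊ with hka
  set kb := ⌈(1 - α) * ((n:ℝ) + 1)⌉₊ with hkb
  have hkb1 : 1 ≤ kb := by
    rw [hkb]
    exact Nat.ceil_pos.mpr (by nlinarith)
  have hkab : kb ≤ ka := by
    apply Nat.ceil_le_ceil
    nlinarith
  have hkan : ka ≤ n := by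
    rw [hka]
    apply Nat.ceil_le.mpr
    have h1n : 1/((n:ℝ)+1) * ((n:ℝ)+1) = 1 := by field_simp
    nlinarith
  set m := ka - kb + 1 with hm
  have hmreal : s * ((n:ℝ)+1) < (m:ℝ) := by
    have h1 : (1 - (α - s)) * ((n:ℝ) + 1) ≤ (ka:ℝ) := Nat.le_ceil _
    have h2 : (kb:ℝ) < (1 - α) * ((n:ℝ) + 1) + 1 := by
      rw [hkb]
      exact Nat.ceil_lt_add_one (by nlinarith)
    have hmc : (m:ℝ) = (ka:ℝ) - (kb:ℝ) + 1 := by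
      rw [hm]
      push_cast [Nat.cast_sub hkab]
      ring
    rw [hmc]; nlinarith
  -- the bad set and the counting function
  set bad := {ω | empQuantile (α - s) (fun i => a i ω) + ε <
        empQuantile α (fun i => b i ω)} with hbad
  set f : Ω → ENNReal := fun ω => ∑ i : Fin n, ({ω | a i ω + ε < b i ω}).indicator (fun _ => (1:ENNReal)) ω with hf
  have hA : ∀ i, MeasurableSet {ω | a i ω + ε < b i ω} := fun i =>
    measurableSet_lt ((hameas i).add_const ε) (hbmeas i)
  have hfmeas : Measurable f :=
    Finset.measurable_sum _ (fun i _ => (measurable_const.indicator (hA i)))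
  have hfcard : ∀ ω, f ω =
      ((Finset.univ.filter (fun i => a i ω + ε < b i ω)).card : ENNReal) := by
    intro ω
    rw [hf, Finset.card_filter, Nat.cast_sum]
    apply Finset.sum_congr rfl
    intro i _
    by_cases h : a i ω + ε < b i ω <;> simp [Set.indicator_apply, h]
  have hincl : bad ⊆ {ω | (m:ENNReal) ≤ f ω} := by
    intro ω hω
    rw [Set.mem_setOf_eq, hfcard ω]
    have hdet := det_lemma (fun i => a i ω) (fun i => b i ω) ε hkb1 hkan hkab hω
    exact_mod_cast hdet
  have hint : ∫⁻ ω, f ω ∂P ≤ (n:ENNReal) * ENNReal.ofReal ν := by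
    simp only [hf]
    rw [lintegral_finset_sum _ (fun i _ => measurable_const.indicator (hA i))]
    calc ∑ i : Fin n, ∫⁻ ω, ({ω | a i ω + ε < b i ω}).indicator (fun _ => (1:ENNReal)) ω ∂P
        = ∑ i : Fin n, P {ω | a i ω + ε < b i ω} := by
          congr 1; ext i
          exact lintegral_indicator_one (hA i)
      _ ≤ ∑ _i : Fin n, ENNReal.ofReal ν := Finset.sum_le_sum (fun i _ => hab i)
      _ = (n:ENNReal) * ENNReal.ofReal ν := by
          rw [Finset.sum_const, Finset.card_univ, Fintype.card_fin, nsmul_eq_mul]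
  have hmarkov : (m:ENNReal) * P bad ≤ ENNReal.ofReal ((n:ℝ) * ν) := by
    calc (m:ENNReal) * P bad ≤ (m:ENNReal) * P {ω | (m:ENNReal) ≤ f ω} := by
          exact mul_le_mul_right (measure_mono hincl) _
      _ ≤ ∫⁻ ω, f ω ∂P := mul_meas_ge_le_lintegral₀ hfmeas.aemeasurable _
      _ ≤ (n:ENNReal) * ENNReal.ofReal ν := hint
      _ = ENNReal.ofReal ((n:ℝ) * ν) := by
          rw [ENNReal.ofReal_mul (by positivity), ENNReal.ofReal_natCast]
  have hPtop : P bad ≠ ⊤ := measure_ne_top P bad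
  have hp0 : 0 ≤ (P bad).toReal := ENNReal.toReal_nonneg
  have hkey : (m:ℝ) * (P bad).toReal ≤ (n:ℝ) * ν := by
    have := ENNReal.toReal_mono (by finiteness) hmarkov
    rwa [ENNReal.toReal_mul, ENNReal.toReal_natCast,
      ENNReal.toReal_ofReal (by positivity)] at this
  constructor
  · rw [le_div_iff₀ hn1]
    nlinarith [hkey, hmreal, hp0, hs0, hss]
  · rw [div_le_iff₀ hn1]
    nlinarith [hs0.le]
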